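/- Let p ∈ ℝ[z₁,...,zₙ] be a homogeneous polynomial of degree k that is real stable (no roots with all coordinates having positive imaginary part) and satisfies p(z) > 0 for all z in the open positive orthant. Then log p is concave on the open positive orthant. -/

import Mathlib

theorem aux_factor_real_roots : ∀ (d : ℕ) (q : Polynomial ℝ), q.natDegree = d → q ≠ 0 →
    (∀ s : ℂ, Polynomial.aeval s q = 0 → s.im = 0) →
    ∃ m : Multiset ℝ, m.card = d ∧
      q = Polynomial.C q.leadingCoeff * (m.map (fun r => Polynomial.X - Polynomial.C r)).prod := by
  intro d
  induction d with
  | zero =>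
    intro q hd _ _
    refine ⟨0, rfl, ?_⟩
    have h1 : q = Polynomial.C (q.coeff 0) := Polynomial.eq_C_of_natDegree_eq_zero hd
    have h2 : q.leadingCoeff = q.coeff 0 := by rw [Polynomial.leadingCoeff, hd]
    rw [h2]
    simpa using h1
  | succ d ih =>
    intro q hd hq hroots
    have hmapne : q.map (algebraMap ℝ ℂ) ≠ 0 :=
      (Polynomial.map_ne_zero_iff (algebraMap ℝ ℂ).injective).mpr hq
    have hdegpos : 0 < (q.map (algebraMap ℝ ℂ)).degree := by
      rw [Polynomial.degree_map_eq_of_injective (algebraMap ℝ ℂ).injective]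
      rw [Polynomial.degree_eq_natDegree hq, hd]
      exact_mod_cast Nat.succ_pos d
    obtain ⟨s, hs⟩ := Complex.exists_root hdegpos
    have hsaeval : Polynomial.aeval s q = 0 := by
      rwa [Polynomial.aeval_def, Polynomial.eval₂_eq_eval_map]
    have hsim : s.im = 0 := hroots s hsaeval
    have hst : s = ((s.re : ℝ) : ℂ) := by
      apply Complex.ext <;> simp [hsim]
    set t := s.re with ht
    have hroot : q.IsRoot t := by
      have h1 : Polynomial.aeval ((t : ℂ)) q = 0 := by rw [← hst]; exact hsaeval
      have h2 : Polynomial.aeval ((t : ℂ)) q = ((q.eval t : ℝ) : ℂ) := by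
        rw [Polynomial.aeval_def]
        exact Polynomial.eval₂_at_apply (algebraMap ℝ ℂ) t
      rw [h2] at h1
      exact_mod_cast h1
    obtain ⟨q₁, hq₁⟩ := Polynomial.dvd_iff_isRoot.mpr hroot
    have hq₁ne : q₁ ≠ 0 := by rintro rfl; simp at hq₁; exact hq hq₁
    have hXC : (Polynomial.X - Polynomial.C t : Polynomial ℝ) ≠ 0 := Polynomial.X_sub_C_ne_zero t
    have hdeg1 : q₁.natDegree = d := by
      have := Polynomial.natDegree_mul hXC hq₁ne
      rw [← hq₁, Polynomial.natDegree_X_sub_C, hd] at this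
      omega
    have hlc : q.leadingCoeff = q₁.leadingCoeff := by
      rw [hq₁, Polynomial.leadingCoeff_mul, Polynomial.leadingCoeff_X_sub_C, one_mul]
    have hroots1 : ∀ s' : ℂ, Polynomial.aeval s' q₁ = 0 → s'.im = 0 := by
      intro s' hs'
      apply hroots s'
      rw [hq₁, map_mul, hs', mul_zero]
    obtain ⟨m₁, hm₁card, hm₁⟩ := ih q₁ hdeg1 hq₁ne hroots1
    refine ⟨t ::ₘ m₁, by simp [hm₁card], ?_⟩
    rw [Multiset.map_cons, Multiset.prod_cons]
    conv_lhs => rw [hq₁, hm₁]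
    rw [hlc]
    ring


theorem aux_eval_smul {n k : ℕ} {p : MvPolynomial (Fin n) ℝ} (h : p.IsHomogeneous k)
    (c : ℝ) (w : Fin n → ℝ) :
    MvPolynomial.eval (fun i => c * w i) p = c ^ k * MvPolynomial.eval w p := by
  rw [MvPolynomial.eval_eq, MvPolynomial.eval_eq, Finset.mul_sum]
  refine Finset.sum_congr rfl fun d hd => ?_
  have hk : ∑ i ∈ d.support, d i = k := by
    have h1 := h (MvPolynomial.mem_support_iff.mp hd)
    rw [← h1]
    rw [show (1 : Fin n → ℕ) = fun _ => 1 from rfl, ← Finsupp.degree_eq_weight_one]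
    rfl
  have hprod : ∏ i ∈ d.support, (c * w i) ^ d i
      = (∏ i ∈ d.support, c ^ d i) * ∏ i ∈ d.support, w i ^ d i := by
    rw [← Finset.prod_mul_distrib]
    exact Finset.prod_congr rfl fun i _ => mul_pow _ _ _
  rw [hprod, Finset.prod_pow_eq_pow_sum, hk]
  ring

theorem aux_log_multiset_prod (m : Multiset ℝ) (h : ∀ r ∈ m, 0 < r) :
    Real.log m.prod = (m.map Real.log).sum := by
  induction m using Multiset.induction with
  | empty => simp
  | cons a s ih =>
    have ha : 0 < a := h a (Multiset.mem_cons_self a s)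
    have hs : ∀ r ∈ s, 0 < r := fun r hr => h r (Multiset.mem_cons_of_mem hr)
    have hsp : 0 < s.prod := Multiset.prod_pos hs
    rw [Multiset.prod_cons, Multiset.map_cons, Multiset.sum_cons,
      Real.log_mul (ne_of_gt ha) (ne_of_gt hsp), ih hs]

theorem aux_main (n k : ℕ) (p : MvPolynomial (Fin n) ℝ)
    (hstable : ∀ z : Fin n → ℂ, (∀ i, 0 < (z i).im) → MvPolynomial.aeval z p ≠ 0)
    (hhom : p.IsHomogeneous k)
    (hpos : ∀ z : Fin n → ℝ, (∀ i, 0 < z i) → 0 < MvPolynomial.eval z p)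
    (x y : Fin n → ℝ) (hx : ∀ i, 0 < x i) (hy : ∀ i, 0 < y i) :
    ∃ (c : ℝ) (m : Multiset ℝ), 0 < c ∧ Multiset.card m = k ∧ (∀ r ∈ m, r < 0) ∧
      c = MvPolynomial.eval y p ∧
      MvPolynomial.eval x p = c * (m.map (fun r => -r)).prod ∧
      ∀ s t : ℝ, 0 < s → 0 < t →
        MvPolynomial.eval (fun i => s * x i + t * y i) p
          = c * (m.map (fun r => t - s * r)).prod := by
  classical
  set q : Polynomial ℝ :=
    MvPolynomial.aeval (fun i => Polynomial.C (x i) + Polynomial.C (y i) * Polynomial.X) p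
    with hqdef
  -- real evaluation of q
  have E1 : ∀ u : ℝ, q.eval u = MvPolynomial.eval (fun i => x i + y i * u) p := by
    intro u
    have h1 := MvPolynomial.comp_aeval_apply
      (Polynomial.aeval u : Polynomial ℝ →ₐ[ℝ] ℝ)
      (f := fun i => Polynomial.C (x i) + Polynomial.C (y i) * Polynomial.X) p
    simp only [map_add, map_mul, Polynomial.aeval_C, Polynomial.aeval_X,
      Algebra.algebraMap_self, RingHom.id_apply] at h1
    rw [← Polynomial.coe_aeval_eq_eval, hqdef, h1]
    rfl
  -- complex evaluation of q
  have E2 : ∀ s : ℂ, Polynomial.aeval s q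
      = MvPolynomial.aeval (fun i => (x i : ℂ) + (y i : ℂ) * s) p := by
    intro s
    have h1 := MvPolynomial.comp_aeval_apply
      (Polynomial.aeval s : Polynomial ℝ →ₐ[ℝ] ℂ)
      (f := fun i => Polynomial.C (x i) + Polynomial.C (y i) * Polynomial.X) p
    simp only [map_add, map_mul, Polynomial.aeval_C, Polynomial.aeval_X] at h1
    rw [hqdef, h1]
    simp [Complex.coe_algebraMap]
  -- conjugation
  have E3 : ∀ z : Fin n → ℂ,
      MvPolynomial.aeval (fun i => (starRingEnd ℂ) (z i)) p
        = (starRingEnd ℂ) (MvPolynomial.aeval z p) := by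
    intro z
    have h1 := MvPolynomial.comp_aeval_apply
      (Complex.conjAe.toAlgHom : ℂ →ₐ[ℝ] ℂ) (f := z) p
    simpa using h1.symm
  -- all complex roots of q are real
  have R : ∀ s : ℂ, Polynomial.aeval s q = 0 → s.im = 0 := by
    intro s hs
    rw [E2] at hs
    by_contra him
    rcases lt_or_gt_of_ne him with hlt | hgt
    · -- s.im < 0 : conjugate
      have h0 : MvPolynomial.aeval
          (fun i => (starRingEnd ℂ) ((x i : ℂ) + (y i : ℂ) * s)) p = 0 := by
        rw [E3, hs, map_zero]
      refine hstable _ (fun i => ?_) h0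
      simp only [map_add, map_mul, Complex.conj_ofReal, Complex.add_im, Complex.mul_im,
        Complex.ofReal_re, Complex.ofReal_im, Complex.conj_im, Complex.conj_re]
      have := mul_pos (hy i) (neg_pos.mpr hlt)
      nlinarith
    · refine hstable _ (fun i => ?_) hs
      simp only [Complex.add_im, Complex.mul_im, Complex.ofReal_re, Complex.ofReal_im]
      nlinarith [mul_pos (hy i) hgt]
  -- q is nonzero
  have hx0 : (fun i => x i + y i * (0:ℝ)) = x := by funext i; ring
  have hq0 : q.eval 0 = MvPolynomial.eval x p := by rw [E1 0, hx0]
  have hpx : 0 < MvPolynomial.eval x p := hpos x hx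
  have hqne : q ≠ 0 := by
    intro h
    rw [h, Polynomial.eval_zero] at hq0
    linarith
  obtain ⟨m, hmcard, hfac⟩ := aux_factor_real_roots q.natDegree q rfl hqne R
  set c := q.leadingCoeff with hcdef
  set d := q.natDegree with hddef
  -- evaluation formula
  have EV : ∀ u : ℝ, q.eval u = c * (m.map (fun r => u - r)).prod := by
    intro u
    conv_lhs => rw [hfac]
    rw [Polynomial.eval_mul, Polynomial.eval_C, Polynomial.eval_multiset_prod,
      Multiset.map_map]
    refine congrArg _ (congrArg _ (Multiset.map_congr rfl fun r _ => ?_))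
    simp
  -- the roots are negative
  have hneg : ∀ r ∈ m, r < 0 := by
    intro r hr
    by_contra hge
    push_neg at hge
    have hz : q.eval r = 0 := by
      rw [EV r]
      have : (0:ℝ) ∈ m.map (fun r' => r - r') := Multiset.mem_map.mpr ⟨r, hr, sub_self r⟩
      rw [Multiset.prod_eq_zero this, mul_zero]
    have hposr : 0 < q.eval r := by
      rw [E1 r]
      exact hpos _ (fun i => add_pos_of_pos_of_nonneg (hx i)
        (mul_nonneg (hy i).le hge))
    linarith
  -- positivity of products of negated roots
  have hprodpos : ∀ u : ℝ, 0 ≤ u → 0 < (m.map (fun r => u - r)).prod := by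
    intro u hu
    refine Multiset.prod_pos fun a ha => ?_
    obtain ⟨r, hr, rfl⟩ := Multiset.mem_map.mp ha
    have := hneg r hr
    linarith
  -- positivity of the leading coefficient
  have hcpos : 0 < c := by
    have h1 : q.eval 0 = c * (m.map (fun r => 0 - r)).prod := EV 0
    rw [hq0] at h1
    have h2 := hprodpos 0 le_rfl
    nlinarith
  -- the reversed polynomial
  set Q2 : Polynomial ℝ :=
    MvPolynomial.aeval (fun i => Polynomial.C (y i) + Polynomial.C (x i) * Polynomial.X) p
    with hQ2def
  have E1' : ∀ u : ℝ, Q2.eval u = MvPolynomial.eval (fun i => y i + x i * u) p := by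
    intro u
    have h1 := MvPolynomial.comp_aeval_apply
      (Polynomial.aeval u : Polynomial ℝ →ₐ[ℝ] ℝ)
      (f := fun i => Polynomial.C (y i) + Polynomial.C (x i) * Polynomial.X) p
    simp only [map_add, map_mul, Polynomial.aeval_C, Polynomial.aeval_X,
      Algebra.algebraMap_self, RingHom.id_apply] at h1
    rw [← Polynomial.coe_aeval_eq_eval, hQ2def, h1]
    rfl
  have hQ20 : Q2.eval 0 = MvPolynomial.eval y p := by
    rw [E1' 0, show (fun i => y i + x i * (0:ℝ)) = y from by funext i; ring]
  have hpy : 0 < MvPolynomial.eval y p := hpos y hy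
  -- polynomial identity
  set G : Polynomial ℝ :=
    (m.map (fun r => 1 - Polynomial.C r * Polynomial.X)).prod with hGdef
  have hGeval : ∀ u : ℝ, G.eval u = (m.map (fun r => 1 - r * u)).prod := by
    intro u
    rw [hGdef, Polynomial.eval_multiset_prod, Multiset.map_map]
    refine congrArg Multiset.prod (Multiset.map_congr rfl fun r _ => ?_)
    simp
  have hG0 : G.eval 0 = 1 := by
    rw [hGeval 0]
    have : m.map (fun r => 1 - r * (0:ℝ)) = m.map (fun _ => (1:ℝ)) := by
      apply Multiset.map_congr rfl
      intro r _
      ring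
    rw [this, Multiset.map_const', Multiset.prod_replicate, one_pow]
  have hmd : Multiset.card m = d := hmcard
  have KEY : (Polynomial.X : Polynomial ℝ) ^ d * Q2
      = Polynomial.C c * Polynomial.X ^ k * G := by
    have hroots : ∀ u : ℝ, 0 < u →
        (Polynomial.X ^ d * Q2 - Polynomial.C c * Polynomial.X ^ k * G).eval u = 0 := by
      intro u hu
      have hune : u ≠ 0 := ne_of_gt hu
      have hfun : (fun i => y i + x i * u) = (fun i => u * (x i + y i * (1/u))) := by
        funext i
        field_simp
        ring
      have h1 : Q2.eval u = u ^ k * q.eval (1/u) := by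
        rw [E1' u, hfun, aux_eval_smul hhom, E1]
      have h2 : u ^ d * ((m.map (fun r => 1/u - r)).prod)
          = (m.map (fun r => 1 - r * u)).prod := by
        rw [← hmd, ← Multiset.prod_replicate, ← Multiset.map_const', ← Multiset.prod_map_mul]
        refine congrArg Multiset.prod (Multiset.map_congr rfl fun r _ => ?_)
        field_simp
      have h3 : u ^ d * Q2.eval u = c * u ^ k * (m.map (fun r => 1 - r * u)).prod := by
        rw [h1, EV (1/u), ← h2]
        ring
      simp only [Polynomial.eval_sub, Polynomial.eval_mul, Polynomial.eval_pow,
        Polynomial.eval_X, Polynomial.eval_C, hGeval u]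
      rw [sub_eq_zero, h3]
    have hinf : {u : ℝ | (Polynomial.X ^ d * Q2
        - Polynomial.C c * Polynomial.X ^ k * G).IsRoot u}.Infinite :=
      (Set.Ioi_infinite (0:ℝ)).mono (fun u hu => hroots u hu)
    have h0 := Polynomial.eq_zero_of_infinite_isRoot _ hinf
    exact sub_eq_zero.mp h0
  -- conclude d = k and c = eval y p
  have hXdne : (Polynomial.X : Polynomial ℝ) ^ d ≠ 0 :=
    pow_ne_zero _ Polynomial.X_ne_zero
  have hdk : d = k := by
    rcases lt_trichotomy d k with hlt | heq | hgt
    · exfalso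
      have hsplit : (Polynomial.X : Polynomial ℝ) ^ k
          = Polynomial.X ^ d * Polynomial.X ^ (k - d) := by
        rw [← pow_add]
        congr 1
        omega
      have h1 : (Polynomial.X : Polynomial ℝ) ^ d * Q2
          = Polynomial.X ^ d * (Polynomial.C c * Polynomial.X ^ (k - d) * G) := by
        rw [KEY, hsplit]
        ring
      have h2 := mul_left_cancel₀ hXdne h1
      have h3 : Q2.eval 0 = 0 := by
        rw [h2]
        simp only [Polynomial.eval_mul, Polynomial.eval_pow, Polynomial.eval_C,
          Polynomial.eval_X, hG0]
        rw [zero_pow (by omega : k - d ≠ 0)]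
        ring
      rw [hQ20] at h3
      linarith
    · exact heq
    · exfalso
      have hXkne : (Polynomial.X : Polynomial ℝ) ^ k ≠ 0 :=
        pow_ne_zero _ Polynomial.X_ne_zero
      have hsplit : (Polynomial.X : Polynomial ℝ) ^ d
          = Polynomial.X ^ k * Polynomial.X ^ (d - k) := by
        rw [← pow_add]
        congr 1
        omega
      have h1 : (Polynomial.X : Polynomial ℝ) ^ k * (Polynomial.X ^ (d - k) * Q2)
          = Polynomial.X ^ k * (Polynomial.C c * G) := by
        rw [← mul_assoc, ← hsplit, KEY]
        ring
      have h2 := mul_left_cancel₀ hXkne h1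
      have h3 : (0:ℝ) = c := by
        have := congrArg (Polynomial.eval 0) h2
        simpa [hG0, zero_pow (by omega : d - k ≠ 0)] using this
      linarith
  have hQ2G : Q2 = Polynomial.C c * G := by
    have h1 : (Polynomial.X : Polynomial ℝ) ^ d * Q2
        = Polynomial.X ^ d * (Polynomial.C c * G) := by
      rw [KEY, hdk]
      ring
    exact mul_left_cancel₀ hXdne h1
  have hcy : c = MvPolynomial.eval y p := by
    rw [← hQ20, hQ2G]
    simp [hG0]
  -- final identity
  refine ⟨c, m, hcpos, by omega, hneg, hcy, ?_, ?_⟩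
  · rw [← hq0, EV 0]
    refine congrArg _ (congrArg Multiset.prod (Multiset.map_congr rfl fun r _ => ?_))
    ring
  · intro s t hs ht
    have hsne : s ≠ 0 := ne_of_gt hs
    have hfun : (fun i => s * x i + t * y i) = (fun i => s * (x i + y i * (t/s))) := by
      funext i
      field_simp
    have h1 : MvPolynomial.eval (fun i => s * x i + t * y i) p
        = s ^ k * q.eval (t/s) := by
      rw [hfun, aux_eval_smul hhom, E1]
    rw [h1, EV (t/s)]
    have h2 : s ^ k * ((m.map (fun r => t/s - r)).prod)
        = (m.map (fun r => t - s * r)).prod := by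
      rw [← hdk, ← hmd, ← Multiset.prod_replicate, ← Multiset.map_const', ← Multiset.prod_map_mul]
      refine congrArg Multiset.prod (Multiset.map_congr rfl fun r _ => ?_)
      field_simp
    rw [← h2]
    ring

theorem log_concave_of_real_stable (n k : ℕ) (p : MvPolynomial (Fin n) ℝ)
    (hstable : ∀ z : Fin n → ℂ, (∀ i, 0 < (z i).im) → MvPolynomial.aeval z p ≠ 0)
    (hhom : p.IsHomogeneous k)
    (hpos : ∀ z : Fin n → ℝ, (∀ i, 0 < z i) → 0 < MvPolynomial.eval z p) :
    ConcaveOn ℝ {z : Fin n → ℝ | ∀ i, 0 < z i}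
      (fun z => Real.log (MvPolynomial.eval z p)) := by
  constructor
  · -- convexity of the positive orthant
    intro u hu v hv a b ha hb hab i
    simp only [Pi.add_apply, Pi.smul_apply, smul_eq_mul]
    rcases eq_or_lt_of_le ha with rfl | ha'
    · simp only [zero_add] at hab
      subst hab
      simpa using hv i
    · exact add_pos_of_pos_of_nonneg (mul_pos ha' (hu i))
        (mul_nonneg hb (hv i).le)
  · intro x hx y hy a b ha hb hab
    rcases eq_or_lt_of_le ha with rfl | ha'
    · simp only [zero_add] at hab
      subst hab
      simp
    rcases eq_or_lt_of_le hb with rfl | hb'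
    · simp only [add_zero] at hab
      subst hab
      simp
    -- both weights positive
    obtain ⟨c, m, hcpos, hmcard, hneg, hcy, hxval, hid⟩ :=
      aux_main n k p hstable hhom hpos x y hx hy
    have hcomb : (a • x + b • y) = (fun i => a * x i + b * y i) := by
      funext i
      simp
    have hval := hid a b ha' hb'
    have hfacpos : ∀ r ∈ m, 0 < b - a * r := by
      intro r hr
      have := hneg r hr
      nlinarith
    have hnegpos : ∀ r ∈ m, 0 < -r := fun r hr => neg_pos.mpr (hneg r hr)
    simp only [smul_eq_mul]
    rw [hcomb, hval]
    -- logs of products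
    have hprod1pos : 0 < (m.map (fun r => b - a * r)).prod :=
      Multiset.prod_pos (by
        intro z hz
        obtain ⟨r, hr, rfl⟩ := Multiset.mem_map.mp hz
        exact hfacpos r hr)
    have hprod2pos : 0 < (m.map (fun r => -r)).prod :=
      Multiset.prod_pos (by
        intro z hz
        obtain ⟨r, hr, rfl⟩ := Multiset.mem_map.mp hz
        exact hnegpos r hr)
    have hlog1 : Real.log (c * (m.map (fun r => b - a * r)).prod)
        = Real.log c + (m.map (fun r => Real.log (b - a * r))).sum := by
      rw [Real.log_mul (ne_of_gt hcpos) (ne_of_gt hprod1pos),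
        aux_log_multiset_prod _ (by
          intro z hz
          obtain ⟨r, hr, rfl⟩ := Multiset.mem_map.mp hz
          exact hfacpos r hr), Multiset.map_map]
      rfl
    have hlog2 : Real.log (MvPolynomial.eval x p)
        = Real.log c + (m.map (fun r => Real.log (-r))).sum := by
      rw [hxval, Real.log_mul (ne_of_gt hcpos) (ne_of_gt hprod2pos),
        aux_log_multiset_prod _ (by
          intro z hz
          obtain ⟨r, hr, rfl⟩ := Multiset.mem_map.mp hz
          exact hnegpos r hr), Multiset.map_map]
      rfl
    have hlog3 : Real.log (MvPolynomial.eval y p) = Real.log c := by rw [← hcy]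
    rw [hlog1, hlog2, hlog3]
    -- key pointwise inequality
    have hpoint : ∀ r ∈ m, a * Real.log (-r) ≤ Real.log (b - a * r) := by
      intro r hr
      have hmem1 : -r ∈ Set.Ioi (0:ℝ) := hnegpos r hr
      have hmem2 : (1:ℝ) ∈ Set.Ioi (0:ℝ) := Set.mem_Ioi.mpr one_pos
      have := strictConcaveOn_log_Ioi.concaveOn.2 hmem1 hmem2 ha hb hab
      simp only [smul_eq_mul, Real.log_one, mul_zero, add_zero] at this
      calc a * Real.log (-r) ≤ Real.log (a * -r + b * 1) := this
        _ = Real.log (b - a * r) := by ring_nf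
    have hsum : (m.map (fun r => a * Real.log (-r))).sum
        ≤ (m.map (fun r => Real.log (b - a * r))).sum :=
      Multiset.sum_map_le_sum_map _ _ hpoint
    have hmul : (m.map (fun r => a * Real.log (-r))).sum
        = a * (m.map (fun r => Real.log (-r))).sum := Multiset.sum_map_mul_left
    have habL : a * Real.log c + b * Real.log c = Real.log c := by
      rw [← add_mul, hab, one_mul]
    linarith [hsum, hmul, habL]
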